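/- Let p and N be integers with 1 ≤ p ≤ N, let α ∈ ℤ_p and β ∈ ℤ_N, and suppose θ := α/p − β/N is not an integer. Let χ̃_α : ℤ_N → ℂ be the extension by zero of the character χ_α(x) = e^{2πi·α·x/p} of ℤ_p (i.e., χ̃_α(x) = e^{2πi·α·x/p} for representatives 0 ≤ x < p and 0 otherwise). Then |χ̃_α^(β)| ≤ 1/(2·N·dist(θ, ℤ)), where dist(θ, ℤ) denotes the distance from θ to the nearest integer. -/

import Mathlib

/-- The Fourier transform on `ℤ_N`: `ĝ(β) = (1/N) Σ_x g(x)·e^{−2πi·β·x/N}`. -/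
noncomputable def dft {N : ℕ} [NeZero N] (g : ZMod N → ℂ) (b : ZMod N) : ℂ :=
  (N : ℂ)⁻¹ * ∑ x : ZMod N,
    g x * Complex.exp (-(2 * (Real.pi : ℂ) * Complex.I * (b.val : ℂ) * (x.val : ℂ) / (N : ℂ)))

/-- The extension by zero to `ℤ_N` of the character `χ_α(x) = e^{2πi·α·x/p}` of `ℤ_p`. -/
noncomputable def extChr (p N : ℕ) (a : ZMod p) : ZMod N → ℂ := fun x =>
  if x.val < p then
    Complex.exp (2 * (Real.pi : ℂ) * Complex.I * (a.val : ℂ) * (x.val : ℂ) / (p : ℂ))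
  else 0

/-- The frequency offset `θ = α/p − β/N`. -/
noncomputable def theta (p N : ℕ) (a : ZMod p) (b : ZMod N) : ℝ :=
  (a.val : ℝ) / p - (b.val : ℝ) / N

lemma abs_exp_mul_I_sub_one' (φ : ℝ) :
    ‖Complex.exp (φ * Complex.I) - 1‖ = 2 * |Real.sin (φ / 2)| := by
  have hsq : ‖Complex.exp (φ * Complex.I) - 1‖ ^ 2
      = (2 * |Real.sin (φ / 2)|) ^ 2 := by
    rw [Complex.sq_norm]
    have h1 : Complex.exp (↑φ * Complex.I) = Complex.cos φ + Complex.sin φ * Complex.I :=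
      Complex.exp_mul_I _
    rw [h1, ← Complex.ofReal_cos, ← Complex.ofReal_sin]
    have h2 : Real.sin (φ / 2) ^ 2 = 1 / 2 - Real.cos (2 * (φ / 2)) / 2 :=
      Real.sin_sq_eq_half_sub _
    have h3 : Real.sin φ ^ 2 + Real.cos φ ^ 2 = 1 := Real.sin_sq_add_cos_sq φ
    have h4 : |Real.sin (φ / 2)| ^ 2 = Real.sin (φ / 2) ^ 2 := sq_abs _
    simp only [Complex.normSq_apply, Complex.add_re, Complex.add_im, Complex.ofReal_re,
      Complex.ofReal_im, Complex.mul_re, Complex.mul_im, Complex.I_re, Complex.I_im,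
      Complex.sub_re, Complex.sub_im, Complex.one_re, Complex.one_im]
    have h5 : (2 : ℝ) * (φ / 2) = φ := by ring
    rw [h5] at h2
    nlinarith [h2, h3, h4]
  have h0 : 0 ≤ ‖Complex.exp (φ * Complex.I) - 1‖ := norm_nonneg _
  have h1 : 0 ≤ 2 * |Real.sin (φ / 2)| := by positivity
  nlinarith [hsq]

/-- Decay estimate for the Fourier coefficients of a modulus-switched character:
`|χ̃_α^(β)| ≤ 1/(2N·dist(θ,ℤ))` where `θ = α/p − β/N` is not an integer. -/
theorem stmt10 (p N : ℕ) [NeZero p] [NeZero N] (hp : 1 ≤ p) (hpN : p ≤ N)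
    (α : ZMod p) (β : ZMod N)
    (hθ : ∀ k : ℤ, theta p N α β ≠ (k : ℝ)) :
    ‖dft (extChr p N α) β‖
      ≤ 1 / (2 * (N : ℝ) * |theta p N α β - round (theta p N α β)|) := by
  set θ := theta p N α β with hθdef
  set t : ℝ := θ - round θ with htdef
  have hNpos : (0 : ℝ) < N := by exact_mod_cast Nat.pos_of_ne_zero (NeZero.ne N)
  have hppos : (0 : ℝ) < p := by exact_mod_cast Nat.pos_of_ne_zero (NeZero.ne p)
  have hNC : (N : ℂ) ≠ 0 := by exact_mod_cast hNpos.ne'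
  have hpC : (p : ℂ) ≠ 0 := by exact_mod_cast hppos.ne'
  have htne : t ≠ 0 := by
    intro h
    exact hθ (round θ) (by linarith [sub_eq_zero.mp h])
  have htpos : 0 < |t| := abs_pos.mpr htne
  have htle : |t| ≤ 1 / 2 := abs_sub_round θ
  set z : ℂ := Complex.exp (((2 * Real.pi * θ : ℝ) : ℂ) * Complex.I) with hzdef
  have hzne : z ≠ 1 := by
    intro h
    rw [hzdef, Complex.exp_eq_one_iff] at h
    obtain ⟨n, hn⟩ := h
    apply hθ n
    have hn2 : ((2 * Real.pi * θ : ℝ) : ℂ) * Complex.I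
        = ((n * (2 * Real.pi) : ℝ) : ℂ) * Complex.I := by push_cast at hn ⊢; linear_combination hn
    have h2 := mul_right_cancel₀ Complex.I_ne_zero hn2
    have h3 : (2 : ℝ) * Real.pi * θ = n * (2 * Real.pi) := by exact_mod_cast h2
    have hpi : (0 : ℝ) < Real.pi := Real.pi_pos
    have : (2 * Real.pi) * θ = (2 * Real.pi) * n := by linarith
    exact mul_left_cancel₀ (by positivity) this
  -- each term of the sum is a power of z
  have hterm : ∀ i : ℕ, i < p →
      Complex.exp (2 * (Real.pi : ℂ) * Complex.I * (α.val : ℂ) * (i : ℂ) / (p : ℂ)) *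
        Complex.exp (-(2 * (Real.pi : ℂ) * Complex.I * (β.val : ℂ) * (i : ℂ) / (N : ℂ)))
      = z ^ i := by
    intro i _
    rw [hzdef, ← Complex.exp_nat_mul, ← Complex.exp_add]
    congr 1
    rw [hθdef]
    unfold theta
    push_cast
    field_simp
    ring
  -- rewrite the full sum as a geometric sum
  have hsum : ∑ x : ZMod N,
      extChr p N α x *
        Complex.exp (-(2 * (Real.pi : ℂ) * Complex.I * (β.val : ℂ) * (x.val : ℂ) / (N : ℂ)))
      = ∑ i ∈ Finset.range p, z ^ i := by
    have hbij : ∑ x : ZMod N,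
        extChr p N α x *
          Complex.exp (-(2 * (Real.pi : ℂ) * Complex.I * (β.val : ℂ) * (x.val : ℂ) / (N : ℂ)))
        = ∑ i ∈ Finset.range N,
          (if i < p then
              Complex.exp (2 * (Real.pi : ℂ) * Complex.I * (α.val : ℂ) * (i : ℂ) / (p : ℂ))
            else 0) *
            Complex.exp (-(2 * (Real.pi : ℂ) * Complex.I * (β.val : ℂ) * (i : ℂ) / (N : ℂ))) := by
      apply Finset.sum_nbij' (i := fun x => (x : ZMod N).val) (j := fun i => (i : ZMod N))
      · intro x _
        exact Finset.mem_range.mpr (ZMod.val_lt x)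
      · intro i _
        exact Finset.mem_univ _
      · intro x _
        exact ZMod.natCast_rightInverse x
      · intro i hi
        exact ZMod.val_cast_of_lt (Finset.mem_range.mp hi)
      · intro x _
        rfl
    rw [hbij, Finset.range_eq_Ico, ← Finset.sum_Ico_consecutive _ (Nat.zero_le p) hpN]
    have h2 : ∑ i ∈ Finset.Ico p N, (if i < p then
        Complex.exp (2 * (Real.pi : ℂ) * Complex.I * (α.val : ℂ) * (i : ℂ) / (p : ℂ)) else 0) *
        Complex.exp (-(2 * (Real.pi : ℂ) * Complex.I * (β.val : ℂ) * (i : ℂ) / (N : ℂ))) = 0 := by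
      apply Finset.sum_eq_zero
      intro i hi
      rw [if_neg (not_lt.mpr (Finset.mem_Ico.mp hi).1), zero_mul]
    rw [h2, add_zero, ← Finset.range_eq_Ico]
    apply Finset.sum_congr rfl
    intro i hi
    have hip := Finset.mem_range.mp hi
    rw [if_pos hip, hterm i hip]
  -- geometric sum estimate
  have hgeom : ∑ i ∈ Finset.range p, z ^ i = (z ^ p - 1) / (z - 1) := geom_sum_eq hzne p
  have hzabs : ‖z‖ = 1 := by
    rw [hzdef, Complex.norm_exp]
    simp
  have hnum : ‖z ^ p - 1‖ ≤ 2 := by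
    calc ‖z ^ p - 1‖ ≤ ‖z ^ p‖ + ‖(1 : ℂ)‖ :=
          norm_sub_le _ _
      _ = 2 := by rw [norm_pow, hzabs, one_pow, norm_one]; norm_num
  -- lower bound for |z - 1|
  have hz1 : z - 1 = Complex.exp (((2 * Real.pi * t : ℝ) : ℂ) * Complex.I) - 1 := by
    rw [hzdef]
    congr 1
    have : ((2 * Real.pi * θ : ℝ) : ℂ) * Complex.I
        = ((2 * Real.pi * t : ℝ) : ℂ) * Complex.I + (round θ : ℤ) * (2 * Real.pi * Complex.I) := by
      rw [htdef]; push_cast; ring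
    rw [this, Complex.exp_add, Complex.exp_int_mul_two_pi_mul_I, mul_one]
  have hden : 4 * |t| ≤ ‖z - 1‖ := by
    rw [hz1, abs_exp_mul_I_sub_one']
    have h5 : (2 * Real.pi * t) / 2 = Real.pi * t := by ring
    rw [h5]
    have hb : |Real.pi * t| ≤ Real.pi / 2 := by
      rw [abs_mul, abs_of_pos Real.pi_pos]
      calc Real.pi * |t| ≤ Real.pi * (1 / 2) := by
            exact mul_le_mul_of_nonneg_left htle Real.pi_pos.le
        _ = Real.pi / 2 := by ring
    have := Real.mul_abs_le_abs_sin hb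
    rw [abs_mul, abs_of_pos Real.pi_pos] at this
    have hπ : (0 : ℝ) < Real.pi := Real.pi_pos
    calc 4 * |t| = 2 * (2 / Real.pi * (Real.pi * |t|)) := by field_simp; ring
      _ ≤ 2 * |Real.sin (Real.pi * t)| := by linarith
  -- put it together
  unfold dft
  rw [hsum, hgeom, norm_mul, norm_div]
  have habsN : ‖(N : ℂ)⁻¹‖ = (N : ℝ)⁻¹ := by
    rw [norm_inv, Complex.norm_natCast]
  rw [habsN]
  have hzd : (0 : ℝ) < ‖z - 1‖ := lt_of_lt_of_le (by linarith) hden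
  have h1 : ‖z ^ p - 1‖ / ‖z - 1‖ ≤ 2 / (4 * |t|) :=
    div_le_div₀ (by norm_num) hnum (by positivity) hden
  calc (N : ℝ)⁻¹ * (‖z ^ p - 1‖ / ‖z - 1‖)
      ≤ (N : ℝ)⁻¹ * (2 / (4 * |t|)) := by
        exact mul_le_mul_of_nonneg_left h1 (by positivity)
    _ = 1 / (2 * (N : ℝ) * |t|) := by
        field_simp
        ring
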